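/- For integers i ≥ 3 and k ≥ i + 2, the 1-Frobenius number of the triple (F_i, F_{i+2}, F_{i+k}) equals (2·F_i − 1)·F_{i+2} − F_i. -/

import Mathlib

/-- Number of representations of `n` as a nonnegative integer combination of `a`, `b`, `c`. -/
noncomputable def repCount (a b c : ℕ) (n : ℤ) : ℕ :=
  Nat.card {v : ℕ × ℕ × ℕ // (v.1 : ℤ) * a + v.2.1 * b + v.2.2 * c = n}

/-- `g` is the `p`-Frobenius number of `a, b, c`: the largest integer with at most `p`
representations. -/
def IsPFrob (p a b c : ℕ) (g : ℤ) : Prop :=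
  IsGreatest {n : ℤ | repCount a b c n ≤ p} g

/-- Lucas numbers. -/
def lucas : ℕ → ℕ
  | 0 => 2
  | 1 => 1
  | n + 2 => lucas n + lucas (n + 1)

/-- Existence of a representation beyond the Frobenius number of a coprime pair. -/
lemma exists_rep (a b : ℕ) (hab : Nat.Coprime a b) (ha : 0 < a) (hb : 0 < b) (n : ℤ)
    (hn : (a : ℤ) * b - a - b < n) : ∃ x y : ℕ, (x : ℤ) * a + y * b = n := by
  obtain ⟨u, v, huv⟩ : IsCoprime (a : ℤ) b := Nat.isCoprime_iff_coprime.2 hab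
  have ha' : (0 : ℤ) < a := by exact_mod_cast ha
  have hb' : (0 : ℤ) < b := by exact_mod_cast hb
  set x0 : ℤ := (n * u) % b with hx0
  have hx0nn : 0 ≤ x0 := Int.emod_nonneg _ (ne_of_gt hb')
  have hx0lt : x0 < b := Int.emod_lt_of_pos _ hb'
  have h2 : (b : ℤ) * (n * u / b) + x0 = n * u := Int.mul_ediv_add_emod (n * u) b
  have key : n - x0 * a = (b : ℤ) * (n * u / b * a + n * v) := by
    linear_combination (-(a : ℤ)) * h2 - n * huv
  have hqnn : 0 ≤ n * u / b * a + n * v := by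
    by_contra hneg
    push_neg at hneg
    have h3 : n * u / b * a + n * v ≤ -1 := by omega
    have h4 : (b : ℤ) * (n * u / b * a + n * v) ≤ b * (-1) := by
      exact mul_le_mul_of_nonneg_left h3 (le_of_lt hb')
    nlinarith [mul_le_mul_of_nonneg_right (le_of_lt hx0lt) (le_of_lt ha')]
  refine ⟨x0.toNat, (n * u / b * a + n * v).toNat, ?_⟩
  rw [Int.toNat_of_nonneg hx0nn, Int.toNat_of_nonneg hqnn]
  linarith [key]

/-- Uniqueness of the representation of `2ab - a - b`. -/
lemma rep_unique (a b : ℕ) (hab : Nat.Coprime a b) (ha : 0 < a) (hb : 0 < b)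
    (x y : ℕ) (h : (x : ℤ) * a + y * b = 2 * a * b - a - b) :
    (x : ℤ) = b - 1 ∧ (y : ℤ) = a - 1 := by
  have ha' : (0 : ℤ) < a := by exact_mod_cast ha
  have hb' : (0 : ℤ) < b := by exact_mod_cast hb
  have hcoba : IsCoprime (b : ℤ) (a : ℤ) := (Nat.isCoprime_iff_coprime.2 hab).symm
  have hcoab : IsCoprime (a : ℤ) (b : ℤ) := Nat.isCoprime_iff_coprime.2 hab
  have hdb : (b : ℤ) ∣ ((x : ℤ) + 1) * a := ⟨2 * a - ((y : ℤ) + 1), by linarith [h]⟩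
  have hda : (a : ℤ) ∣ ((y : ℤ) + 1) * b := ⟨2 * b - ((x : ℤ) + 1), by linarith [h]⟩
  obtain ⟨t, ht⟩ : (b : ℤ) ∣ ((x : ℤ) + 1) := hcoba.dvd_of_dvd_mul_right hdb
  obtain ⟨s, hs⟩ : (a : ℤ) ∣ ((y : ℤ) + 1) := hcoab.dvd_of_dvd_mul_right hda
  have hxpos : (0 : ℤ) < (x : ℤ) + 1 := by positivity
  have hypos : (0 : ℤ) < (y : ℤ) + 1 := by positivity
  have htpos : 0 < t := by nlinarith
  have hspos : 0 < s := by nlinarith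
  have hsum : (a : ℤ) * b * (t + s) = a * b * 2 := by nlinarith [h, ht, hs]
  have hab0 : (a : ℤ) * b ≠ 0 := by positivity
  have hts : t + s = 2 := mul_left_cancel₀ hab0 hsum
  have ht1 : t = 1 := by omega
  have hs1 : s = 1 := by omega
  constructor
  · rw [ht1, mul_one] at ht; linarith
  · rw [hs1, mul_one] at hs; linarith

/-- The representation set is finite. -/
lemma rep_finite (a b c : ℕ) (ha : 0 < a) (hb : 0 < b) (hc : 0 < c) (n : ℤ) :
    Finite {v : ℕ × ℕ × ℕ // (v.1 : ℤ) * a + v.2.1 * b + v.2.2 * c = n} := by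
  have hfin : {v : ℕ × ℕ × ℕ | (v.1 : ℤ) * a + v.2.1 * b + v.2.2 * c = n}.Finite := by
    apply Set.Finite.subset (Set.finite_Iic (n.toNat, n.toNat, n.toNat))
    rintro ⟨x, y, z⟩ hv
    simp only [Set.mem_setOf_eq] at hv
    have ha' : (1 : ℤ) ≤ a := by exact_mod_cast ha
    have hb' : (1 : ℤ) ≤ b := by exact_mod_cast hb
    have hc' : (1 : ℤ) ≤ c := by exact_mod_cast hc
    have h0 : (x : ℤ) + y + z ≤ n := by
      nlinarith [mul_nonneg (Int.natCast_nonneg x) (by linarith : (0:ℤ) ≤ (a:ℤ) - 1),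
        mul_nonneg (Int.natCast_nonneg y) (by linarith : (0:ℤ) ≤ (b:ℤ) - 1),
        mul_nonneg (Int.natCast_nonneg z) (by linarith : (0:ℤ) ≤ (c:ℤ) - 1)]
    simp only [Set.mem_Iic, Prod.mk_le_mk]
    omega
  exact hfin.to_subtype

theorem stmt4 (i k : ℕ) (hi : 3 ≤ i) (hk : i + 2 ≤ k) :
    letI F := Nat.fib
    IsPFrob 1 (F i) (F (i + 2)) (F (i + k))
      ((2 * (F i : ℤ) - 1) * F (i + 2) - F i) := by
  obtain ⟨j, rfl⟩ : ∃ j, i = j + 3 := ⟨i - 3, by omega⟩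
  set a := Nat.fib (j + 3) with hadef
  set b := Nat.fib ((j + 3) + 2) with hbdef
  set c := Nat.fib ((j + 3) + k) with hcdef
  -- basic facts
  have ha2 : 2 ≤ a := by
    have : Nat.fib 3 ≤ Nat.fib (j + 3) := Nat.fib_mono hi
    simpa [show Nat.fib 3 = 2 by rfl] using this
  have ha : 0 < a := by omega
  have hb : a < b := (Nat.fib_lt_fib (by omega)).2 (by omega)
  have hb0 : 0 < b := by omega
  have hc0 : 0 < c := by
    rw [hcdef]; exact Nat.fib_pos.2 (by omega)
  -- coprimality
  have hab : Nat.Coprime a b := by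
    have hd : Nat.gcd (j + 3) ((j + 3) + 2) ∣ 2 := by
      have h2 := Nat.dvd_sub (Nat.gcd_dvd_right (j + 3) ((j + 3) + 2)) (Nat.gcd_dvd_left (j + 3) ((j + 3) + 2))
      simpa using h2
    have hdpos : 0 < Nat.gcd (j + 3) ((j + 3) + 2) := Nat.gcd_pos_of_pos_left _ (by omega)
    have hdle : Nat.gcd (j + 3) ((j + 3) + 2) ≤ 2 := Nat.le_of_dvd (by norm_num) hd
    have hfib1 : Nat.fib (Nat.gcd (j + 3) ((j + 3) + 2)) = 1 := by
      interval_cases h : Nat.gcd (j + 3) ((j + 3) + 2) <;> rfl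
    have hgcd := Nat.fib_gcd (j + 3) ((j + 3) + 2)
    unfold Nat.Coprime
    rw [hadef, hbdef, ← hgcd, hfib1]
  -- c > g
  have hcg : 2 * a * b < c + a + b := by
    have h1 : Nat.fib (2 * (j + 3) + 2) ≤ c := by
      rw [hcdef]; exact Nat.fib_mono (by omega)
    have h2 : Nat.fib (2 * (j + 3) + 2) = Nat.fib (j + 3) * Nat.fib (j + 4) +
        Nat.fib (j + 4) * Nat.fib (j + 5) := by
      have h3 := Nat.fib_add (j + 3) (j + 4)
      rw [show j + 3 + (j + 4) + 1 = 2 * (j + 3) + 2 by omega] at h3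
      rw [h3]
    set f := Nat.fib (j + 4) with hfdef
    set g' := Nat.fib (j + 2) with hg'def
    have hbf : b = a + f := Nat.fib_add_two
    have hfg : f = g' + a := Nat.fib_add_two
    have hag : a ≤ 2 * g' := by
      have h4 : Nat.fib (j + 3) = Nat.fib (j + 1) + Nat.fib (j + 2) := Nat.fib_add_two
      have h5 : Nat.fib (j + 1) ≤ Nat.fib (j + 2) := Nat.fib_mono (by omega)
      omega
    have hf2 : 2 * a ^ 2 ≤ f ^ 2 := by nlinarith
    have hfa : 0 < f := by rw [hfdef]; exact Nat.fib_pos.2 (by omega)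
    nlinarith [h1, h2, hbf]
  have hcg' : (2 : ℤ) * a * b - a - b < c := by
    have h5 := hcg; zify at h5; linarith
  have hg : (2 * (a : ℤ) - 1) * b - a = 2 * (a : ℤ) * b - a - b := by ring
  constructor
  · -- g has exactly one representation
    show repCount a b c ((2 * (a : ℤ) - 1) * b - a) ≤ 1
    have hsub : Subsingleton
        {v : ℕ × ℕ × ℕ // (v.1 : ℤ) * a + v.2.1 * b + v.2.2 * c =
          (2 * (a : ℤ) - 1) * b - a} := by
      constructor
      rintro ⟨⟨x, y, z⟩, hv⟩ ⟨⟨x', y', z'⟩, hv'⟩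
      simp only at hv hv'
      have hzkey : ∀ (p q r : ℕ), (p : ℤ) * a + q * b + r * c = (2 * (a : ℤ) - 1) * b - a →
          r = 0 := by
        intro p q r hpqr
        by_contra hr0
        have hr1 : (1 : ℤ) ≤ r := by exact_mod_cast Nat.one_le_iff_ne_zero.2 hr0
        have hcpos : (0 : ℤ) ≤ c := Int.natCast_nonneg c
        have hrc : (c : ℤ) ≤ r * c := le_mul_of_one_le_left hcpos hr1
        have hp1 : (0 : ℤ) ≤ (p : ℤ) * a := by positivity
        have hq1 : (0 : ℤ) ≤ (q : ℤ) * b := by positivity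
        rw [hg] at hpqr
        linarith
      have hz0 := hzkey x y z hv
      have hz0' := hzkey x' y' z' hv'
      subst hz0; subst hz0'
      have hv2 : (x : ℤ) * a + y * b = 2 * (a : ℤ) * b - a - b := by
        rw [hg] at hv; push_cast at hv; linarith
      have hv2' : (x' : ℤ) * a + y' * b = 2 * (a : ℤ) * b - a - b := by
        rw [hg] at hv'; push_cast at hv'; linarith
      have e := rep_unique a b hab ha hb0 x y hv2
      have e' := rep_unique a b hab ha hb0 x' y' hv2'
      have hx : x = x' := by exact_mod_cast e.1.trans e'.1.symm
      have hy : y = y' := by exact_mod_cast e.2.trans e'.2.symm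
      subst hx; subst hy; rfl
    unfold repCount
    rcases isEmpty_or_nonempty
        {v : ℕ × ℕ × ℕ // (v.1 : ℤ) * a + v.2.1 * b + v.2.2 * c =
          (2 * (a : ℤ) - 1) * b - a} with he | hne
    · rw [Nat.card_of_isEmpty]; omega
    · rw [Nat.card_unique]
  · -- upper bound
    rintro n hn
    simp only [Set.mem_setOf_eq] at hn
    by_contra hgn
    push_neg at hgn
    rw [hg] at hgn
    haveI hfin := rep_finite a b c ha hb0 hc0 n
    obtain ⟨x, y, hxy⟩ := exists_rep a b hab ha hb0 (n - a * b) (by linarith)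
    have h1 : (((x + b : ℕ)) : ℤ) * a + (y : ℤ) * b + ((0 : ℕ) : ℤ) * c = n := by
      push_cast; linear_combination hxy
    have h2 : (x : ℤ) * a + (((y + a : ℕ)) : ℤ) * b + ((0 : ℕ) : ℤ) * c = n := by
      push_cast; linear_combination hxy
    haveI hnt : Nontrivial
        {v : ℕ × ℕ × ℕ // (v.1 : ℤ) * a + v.2.1 * b + v.2.2 * c = n} :=
      ⟨⟨⟨(x + b, y, 0), h1⟩, ⟨(x, y + a, 0), h2⟩, by
        simp only [ne_eq, Subtype.mk.injEq, Prod.mk.injEq]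
        omega⟩⟩
    have hlt := Finite.one_lt_card
      (α := {v : ℕ × ℕ × ℕ // (v.1 : ℤ) * a + v.2.1 * b + v.2.2 * c = n})
    unfold repCount at hn
    omega
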